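/- For the one-layer nonlinear regression model, the gradient H(θ, y) = ∇_θ U(θ, y) of the regularized quadratic loss U(θ, y) = |h(z,θ) − l|² + κ|θ|² satisfies Assumptions 1 and 2 with β = 2: there exist constants K₁, K₂, K₃ > 0 with |H(θ,y)| ≤ K₁|θ| + K₂|y|² + K₃ for all θ, y, and there exist constants c > 0 and C > 0 with ⟨H(θ,y), θ⟩ ≥ c|θ|² − C(|y|⁴ + 1) for all θ, y. -/

import Mathlib

open scoped RealInnerProductSpace

/-- The feature part z of a data point y = (z, l). -/
noncomputable def featurePart (d₀ d₁ : ℕ) (y : EuclideanSpace ℝ (Fin d₀ ⊕ Fin d₁)) :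
    EuclideanSpace ℝ (Fin d₀) :=
  WithLp.toLp 2 (fun i => y (Sum.inl i))

/-- The label part l of a data point y = (z, l). -/
noncomputable def labelPart (d₀ d₁ : ℕ) (y : EuclideanSpace ℝ (Fin d₀ ⊕ Fin d₁)) :
    EuclideanSpace ℝ (Fin d₁) :=
  WithLp.toLp 2 (fun j => y (Sum.inr j))

/-- One-layer network h(z, θ) = s(Wz + g), with θ = (W, g) flattened into
EuclideanSpace ℝ ((Fin d₁ × Fin d₀) ⊕ Fin d₁). -/
noncomputable def oneLayerNet (d₀ d₁ : ℕ) (s : Fin d₁ → ℝ → ℝ)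
    (z : EuclideanSpace ℝ (Fin d₀))
    (θ : EuclideanSpace ℝ ((Fin d₁ × Fin d₀) ⊕ Fin d₁)) :
    EuclideanSpace ℝ (Fin d₁) :=
  WithLp.toLp 2 (fun j => s j ((∑ i : Fin d₀, θ (Sum.inl (j, i)) * z i) + θ (Sum.inr j)))

noncomputable def oneLayerLoss (d₀ d₁ : ℕ) (s : Fin d₁ → ℝ → ℝ)
    (y : EuclideanSpace ℝ (Fin d₀ ⊕ Fin d₁))
    (θ : EuclideanSpace ℝ ((Fin d₁ × Fin d₀) ⊕ Fin d₁)) : ℝ :=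
  ‖oneLayerNet d₀ d₁ s (featurePart d₀ d₁ y) θ - labelPart d₀ d₁ y‖ ^ 2

noncomputable def testGrad (d₀ d₁ : ℕ) (s : Fin d₁ → ℝ → ℝ)
    (y : EuclideanSpace ℝ (Fin d₀ ⊕ Fin d₁))
    (θ : EuclideanSpace ℝ ((Fin d₁ × Fin d₀) ⊕ Fin d₁)) :=
  gradient (oneLayerLoss d₀ d₁ s y) θ

/-- The gradient H(θ, y) = ∇_θ [ |h(z,θ) − l|² + κ|θ|² ] of the regularized loss. -/
noncomputable def oneLayerH (d₀ d₁ : ℕ) (s : Fin d₁ → ℝ → ℝ) (κ : ℝ)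
    (θ : EuclideanSpace ℝ ((Fin d₁ × Fin d₀) ⊕ Fin d₁))
    (y : EuclideanSpace ℝ (Fin d₀ ⊕ Fin d₁)) :
    EuclideanSpace ℝ ((Fin d₁ × Fin d₀) ⊕ Fin d₁) :=
  gradient (fun θ' => oneLayerLoss d₀ d₁ s y θ' + κ * ‖θ'‖ ^ 2) θ

lemma euclid_norm_sq {n : Type*} [Fintype n] (x : EuclideanSpace ℝ n) :
    ‖x‖ ^ 2 = ∑ i, x i ^ 2 := by
  rw [← real_inner_self_eq_norm_sq, PiLp.inner_apply]
  simp [RCLike.inner_apply, sq]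

lemma euclid_abs_coord_le {n : Type*} [Fintype n] (x : EuclideanSpace ℝ n) (i : n) :
    |x i| ≤ ‖x‖ := by
  have h1 : (x i) ^ 2 ≤ ‖x‖ ^ 2 := by
    rw [euclid_norm_sq]
    exact Finset.single_le_sum (fun j _ => sq_nonneg (x j)) (Finset.mem_univ i)
  calc |x i| = Real.sqrt ((x i) ^ 2) := (Real.sqrt_sq_eq_abs _).symm
    _ ≤ Real.sqrt (‖x‖ ^ 2) := Real.sqrt_le_sqrt h1
    _ = ‖x‖ := Real.sqrt_sq (norm_nonneg x)

noncomputable def uVec (d₀ d₁ : ℕ) (z : EuclideanSpace ℝ (Fin d₀)) (j : Fin d₁) :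
    EuclideanSpace ℝ ((Fin d₁ × Fin d₀) ⊕ Fin d₁) :=
  WithLp.toLp 2 (fun p => Sum.elim (fun (q : Fin d₁ × Fin d₀) => if q.1 = j then z q.2 else 0)
    (fun j' => if j' = j then (1 : ℝ) else 0) p)

noncomputable def preAct (d₀ d₁ : ℕ) (z : EuclideanSpace ℝ (Fin d₀))
    (θ : EuclideanSpace ℝ ((Fin d₁ × Fin d₀) ⊕ Fin d₁)) (j : Fin d₁) : ℝ :=
  (∑ i : Fin d₀, θ (Sum.inl (j, i)) * z i) + θ (Sum.inr j)

lemma inner_uVec (d₀ d₁ : ℕ) (z : EuclideanSpace ℝ (Fin d₀)) (j : Fin d₁)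
    (θ : EuclideanSpace ℝ ((Fin d₁ × Fin d₀) ⊕ Fin d₁)) :
    ⟪uVec d₀ d₁ z j, θ⟫ = preAct d₀ d₁ z θ j := by
  classical
  rw [PiLp.inner_apply]
  simp only [RCLike.inner_apply, conj_trivial]
  rw [Fintype.sum_sum_type, preAct]
  congr 1
  · rw [Fintype.sum_prod_type, Finset.sum_eq_single j]
    · exact Finset.sum_congr rfl fun i _ => by simp [uVec, mul_comm]
    · intro b _ hb
      exact Finset.sum_eq_zero fun i _ => by simp [uVec, hb]
    · simp
  · rw [Finset.sum_eq_single j]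
    · simp [uVec]
    · intro b _ hb; simp [uVec, hb]
    · simp

lemma uVec_norm_le (d₀ d₁ : ℕ) (z : EuclideanSpace ℝ (Fin d₀)) (j : Fin d₁) :
    ‖uVec d₀ d₁ z j‖ ≤ ‖z‖ + 1 := by
  classical
  have h1 : ‖uVec d₀ d₁ z j‖ ^ 2 = ‖z‖ ^ 2 + 1 := by
    rw [euclid_norm_sq, euclid_norm_sq, Fintype.sum_sum_type]
    congr 1
    · rw [Fintype.sum_prod_type, Finset.sum_eq_single j]
      · exact Finset.sum_congr rfl fun i _ => by simp [uVec]
      · intro b _ hb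
        exact Finset.sum_eq_zero fun i _ => by simp [uVec, hb]
      · simp
    · rw [Finset.sum_eq_single j]
      · simp [uVec]
      · intro b _ hb; simp [uVec, hb]
      · simp
  nlinarith [norm_nonneg (uVec d₀ d₁ z j), norm_nonneg z]

lemma featurePart_norm_le (d₀ d₁ : ℕ) (y : EuclideanSpace ℝ (Fin d₀ ⊕ Fin d₁)) :
    ‖featurePart d₀ d₁ y‖ ≤ ‖y‖ := by
  have h1 : ‖featurePart d₀ d₁ y‖ ^ 2 ≤ ‖y‖ ^ 2 := by
    rw [euclid_norm_sq, euclid_norm_sq, Fintype.sum_sum_type]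
    have : ∑ i, (featurePart d₀ d₁ y i) ^ 2 = ∑ i, (y (Sum.inl i)) ^ 2 := rfl
    rw [this]
    exact le_add_of_nonneg_right (Finset.sum_nonneg fun j _ => sq_nonneg _)
  nlinarith [norm_nonneg (featurePart d₀ d₁ y), norm_nonneg y]

open InnerProductSpace in
lemma oneLayerH_eq (d₀ d₁ : ℕ) (s : Fin d₁ → ℝ → ℝ)
    (hsdiff : ∀ j, ContDiff ℝ 1 (s j)) (κ : ℝ)
    (θ : EuclideanSpace ℝ ((Fin d₁ × Fin d₀) ⊕ Fin d₁))
    (y : EuclideanSpace ℝ (Fin d₀ ⊕ Fin d₁)) :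
    oneLayerH d₀ d₁ s κ θ y =
      (∑ j, (2 * (s j (preAct d₀ d₁ (featurePart d₀ d₁ y) θ j) - labelPart d₀ d₁ y j) *
          deriv (s j) (preAct d₀ d₁ (featurePart d₀ d₁ y) θ j)) •
          uVec d₀ d₁ (featurePart d₀ d₁ y) j) + (2 * κ) • θ := by
  classical
  set z := featurePart d₀ d₁ y with hz
  set l := labelPart d₀ d₁ y with hl
  have hfun : (fun θ' : EuclideanSpace ℝ ((Fin d₁ × Fin d₀) ⊕ Fin d₁) =>
      oneLayerLoss d₀ d₁ s y θ' + κ * ‖θ'‖ ^ 2)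
      = fun θ' => (∑ j, (s j ⟪uVec d₀ d₁ z j, θ'⟫ - l j) ^ 2) + κ * ‖θ'‖ ^ 2 := by
    funext θ'
    congr 1
    rw [oneLayerLoss, euclid_norm_sq]
    refine Finset.sum_congr rfl fun j _ => ?_
    rw [inner_uVec]
    congr 1
  have h1 : ∀ j : Fin d₁,
      HasFDerivAt (fun θ' : EuclideanSpace ℝ ((Fin d₁ × Fin d₀) ⊕ Fin d₁) =>
        (s j ⟪uVec d₀ d₁ z j, θ'⟫ - l j) ^ 2)
      ((2 * (s j (preAct d₀ d₁ z θ j) - l j) * deriv (s j) (preAct d₀ d₁ z θ j)) •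
        innerSL ℝ (uVec d₀ d₁ z j)) θ := by
    intro j
    have hinner : HasFDerivAt (fun θ' : EuclideanSpace ℝ ((Fin d₁ × Fin d₀) ⊕ Fin d₁) =>
        ⟪uVec d₀ d₁ z j, θ'⟫) (innerSL ℝ (uVec d₀ d₁ z j)) θ :=
      (innerSL ℝ (uVec d₀ d₁ z j)).hasFDerivAt
    have hs : HasDerivAt (s j) (deriv (s j) ⟪uVec d₀ d₁ z j, θ⟫) ⟪uVec d₀ d₁ z j, θ⟫ :=
      (((hsdiff j).differentiable one_ne_zero) ⟪uVec d₀ d₁ z j, θ⟫).hasDerivAt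
    have hcomp := hs.comp_hasFDerivAt θ hinner
    have hsub := hcomp.sub_const (l j)
    have hmul := hsub.mul hsub
    have heq : (fun θ' : EuclideanSpace ℝ ((Fin d₁ × Fin d₀) ⊕ Fin d₁) =>
        (s j ⟪uVec d₀ d₁ z j, θ'⟫ - l j) ^ 2)
        = fun θ' => ((s j ∘ fun θ'' => ⟪uVec d₀ d₁ z j, θ''⟫) θ' - l j) *
            ((s j ∘ fun θ'' => ⟪uVec d₀ d₁ z j, θ''⟫) θ' - l j) := by
      funext θ'; simp [Function.comp, sq]
    rw [heq]
    convert hmul using 1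
    case e'_12 =>
      ext w
      simp only [ContinuousLinearMap.coe_smul', Pi.smul_apply, innerSL_apply_apply,
        ContinuousLinearMap.add_apply, Function.comp_apply, smul_eq_mul, inner_uVec]
      ring
    all_goals rfl
  have hnorm : HasFDerivAt (fun θ' : EuclideanSpace ℝ ((Fin d₁ × Fin d₀) ⊕ Fin d₁) =>
      ‖θ'‖ ^ 2) ((2 : ℕ) • innerSL ℝ θ) θ := (hasStrictFDerivAt_norm_sq θ).hasFDerivAt
  have hD := (HasFDerivAt.sum (fun j (_ : j ∈ Finset.univ) => h1 j)).add (hnorm.const_mul κ)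
  have hgrad : HasGradientAt (fun θ' : EuclideanSpace ℝ ((Fin d₁ × Fin d₀) ⊕ Fin d₁) =>
      oneLayerLoss d₀ d₁ s y θ' + κ * ‖θ'‖ ^ 2)
      ((∑ j, (2 * (s j (preAct d₀ d₁ z θ j) - l j) * deriv (s j) (preAct d₀ d₁ z θ j)) •
        uVec d₀ d₁ z j) + (2 * κ) • θ) θ := by
    rw [hasGradientAt_iff_hasFDerivAt, hfun]
    convert hD using 1
    case e'_12 =>
      ext w
      rw [toDual_apply_apply]
      simp only [inner_add_left, sum_inner, real_inner_smul_left,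
        ContinuousLinearMap.add_apply, ContinuousLinearMap.coe_smul', Pi.smul_apply,
        ContinuousLinearMap.sum_apply, innerSL_apply_apply, smul_eq_mul, nsmul_eq_mul,
        Pi.mul_apply, Pi.ofNat_apply, Nat.cast_ofNat]
      ring
    case e'_11 =>
      funext θ'
      simp [Finset.sum_apply]
    all_goals rfl
  exact hgrad.gradient

lemma arith_aux (κ t r P Q R D : ℝ) (hPP : P * P ≤ (Q * r ^ 2 + R) * (Q * r ^ 2 + R))
    (hC4 : 4 * κ * (D * (r ^ 4 + 1)) = 2 * (Q ^ 2 + R ^ 2) * (r ^ 4 + 1)) :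
    4 * κ * (P * t) ≤ 4 * κ * (κ * t ^ 2 + D * (r ^ 4 + 1)) := by
  nlinarith [sq_nonneg (2 * κ * t - P), hPP, hC4, sq_nonneg (Q * r ^ 2 - R), sq_nonneg Q,
    mul_nonneg (sq_nonneg R) (sq_nonneg (r ^ 2))]

lemma quad_bound (dd Ms r : ℝ) (hd : 0 ≤ dd) (hMs : 0 ≤ Ms) (hr : 0 ≤ r) :
    dd * (2 * Ms * (Ms + r) * (r + 1)) ≤
      (2 * dd * Ms * (Ms + 2) + 1) * r ^ 2 + (2 * dd * Ms * (2 * Ms + 1) + 1) := by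
  have key : 0 ≤ dd * Ms * (Ms + 1) * (r ^ 2 - r + 1) := by
    have h1 : (0:ℝ) ≤ r ^ 2 - r + 1 := by nlinarith [sq_nonneg (2 * r - 1)]
    have h2 : (0:ℝ) ≤ dd * Ms * (Ms + 1) :=
      mul_nonneg (mul_nonneg hd hMs) (by linarith)
    exact mul_nonneg h2 h1
  nlinarith [key, sq_nonneg r]

lemma inner_add_smul_lower {E : Type*} [NormedAddCommGroup E] [InnerProductSpace ℝ E]
    (S θ : E) (a B : ℝ) (hB : ‖S‖ ≤ B) :
    ⟪S + a • θ, θ⟫ ≥ a * ‖θ‖ ^ 2 - B * ‖θ‖ := by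
  rw [inner_add_left, real_inner_smul_left, real_inner_self_eq_norm_sq]
  have h1 : |⟪S, θ⟫| ≤ B * ‖θ‖ := le_trans (abs_real_inner_le_norm S θ)
      (mul_le_mul_of_nonneg_right hB (norm_nonneg θ))
  have h2 := neg_abs_le (⟪S, θ⟫ : ℝ)
  linarith

/-- Lemma 3 of the paper: for the one-layer nonlinear regression model
with bounded C¹ activations (|s_i|, |s_i'| ≤ M_s), the gradient
H(θ,y) = ∇_θ(|h(z,θ) − l|² + κ|θ|²) satisfies Assumption 2 with β = 2, i.e.
|H(θ,y)| ≤ K₁|θ| + K₂|y|² + K₃, and Assumption 1 with a quartic b, i.e.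
⟨H(θ,y), θ⟩ ≥ c|θ|² − C(|y|⁴ + 1). -/
theorem oneLayer_gradient_satisfies_assumptions
    (d₀ d₁ : ℕ) (hd₀ : 0 < d₀) (hd₁ : 0 < d₁)
    (s : Fin d₁ → ℝ → ℝ) (Ms : ℝ)
    (hsdiff : ∀ j, ContDiff ℝ 1 (s j))
    (hsbd : ∀ j x, |s j x| ≤ Ms)
    (hs'bd : ∀ j x, |deriv (s j) x| ≤ Ms)
    (κ : ℝ) (hκ : 0 < κ) :
    (∃ K₁ > (0 : ℝ), ∃ K₂ > (0 : ℝ), ∃ K₃ > (0 : ℝ),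
        ∀ (θ : EuclideanSpace ℝ ((Fin d₁ × Fin d₀) ⊕ Fin d₁))
          (y : EuclideanSpace ℝ (Fin d₀ ⊕ Fin d₁)),
          ‖oneLayerH d₀ d₁ s κ θ y‖ ≤ K₁ * ‖θ‖ + K₂ * ‖y‖ ^ 2 + K₃)
      ∧ (∃ c > (0 : ℝ), ∃ C > (0 : ℝ),
          ∀ (θ : EuclideanSpace ℝ ((Fin d₁ × Fin d₀) ⊕ Fin d₁))
            (y : EuclideanSpace ℝ (Fin d₀ ⊕ Fin d₁)),
            ⟪oneLayerH d₀ d₁ s κ θ y, θ⟫ ≥ c * ‖θ‖ ^ 2 - C * (‖y‖ ^ 4 + 1)) := by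
  have hMs : 0 ≤ Ms := le_trans (abs_nonneg _) (hsbd ⟨0, hd₁⟩ 0)
  have hdd : (0:ℝ) ≤ (d₁ : ℝ) := Nat.cast_nonneg _
  have hSbound : ∀ (θ : EuclideanSpace ℝ ((Fin d₁ × Fin d₀) ⊕ Fin d₁))
      (y : EuclideanSpace ℝ (Fin d₀ ⊕ Fin d₁)),
      ‖∑ j, (2 * (s j (preAct d₀ d₁ (featurePart d₀ d₁ y) θ j) - labelPart d₀ d₁ y j) *
          deriv (s j) (preAct d₀ d₁ (featurePart d₀ d₁ y) θ j)) •
          uVec d₀ d₁ (featurePart d₀ d₁ y) j‖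
        ≤ (d₁:ℝ) * (2 * Ms * (Ms + ‖y‖) * (‖y‖ + 1)) := by
    intro θ y
    have hy0 : (0:ℝ) ≤ ‖y‖ := norm_nonneg y
    refine le_trans (norm_sum_le _ _) ?_
    have hterm : ∀ j : Fin d₁,
        ‖(2 * (s j (preAct d₀ d₁ (featurePart d₀ d₁ y) θ j) - labelPart d₀ d₁ y j) *
          deriv (s j) (preAct d₀ d₁ (featurePart d₀ d₁ y) θ j)) •
          uVec d₀ d₁ (featurePart d₀ d₁ y) j‖ ≤ 2 * Ms * (Ms + ‖y‖) * (‖y‖ + 1) := by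
      intro j
      rw [norm_smul, Real.norm_eq_abs]
      set a := preAct d₀ d₁ (featurePart d₀ d₁ y) θ j with ha
      have h1 : |s j a - labelPart d₀ d₁ y j| ≤ Ms + ‖y‖ := by
        have h2 : |labelPart d₀ d₁ y j| ≤ ‖y‖ := euclid_abs_coord_le y (Sum.inr j)
        have h3 := norm_sub_le (s j a) (labelPart d₀ d₁ y j)
        simp only [Real.norm_eq_abs] at h3
        have := hsbd j a
        linarith
      have hc : |2 * (s j a - labelPart d₀ d₁ y j) * deriv (s j) a| ≤ 2 * Ms * (Ms + ‖y‖) := by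
        rw [abs_mul, abs_mul, abs_two]
        have h4 := hs'bd j a
        nlinarith [abs_nonneg (s j a - labelPart d₀ d₁ y j), abs_nonneg (deriv (s j) a),
          mul_le_mul h1 h4 (abs_nonneg _) (by linarith : (0:ℝ) ≤ Ms + ‖y‖)]
      have hu : ‖uVec d₀ d₁ (featurePart d₀ d₁ y) j‖ ≤ ‖y‖ + 1 := by
        have := uVec_norm_le d₀ d₁ (featurePart d₀ d₁ y) j
        have := featurePart_norm_le d₀ d₁ y
        linarith
      have hA : (0:ℝ) ≤ 2 * Ms * (Ms + ‖y‖) :=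
        mul_nonneg (mul_nonneg (by norm_num) hMs) (by linarith)
      exact mul_le_mul hc hu (norm_nonneg _) hA
    refine le_trans (Finset.sum_le_sum fun j _ => hterm j) ?_
    rw [Finset.sum_const, Finset.card_univ, Fintype.card_fin, nsmul_eq_mul]
  constructor
  · refine ⟨2 * κ, by linarith, 2 * (d₁:ℝ) * Ms * (Ms + 2) + 1, ?_,
      2 * (d₁:ℝ) * Ms * (2 * Ms + 1) + 1, ?_, ?_⟩
    · have h0 : (0:ℝ) ≤ 2 * (d₁:ℝ) * Ms * (Ms + 2) :=
        mul_nonneg (mul_nonneg (by linarith) hMs) (by linarith)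
      linarith
    · have h0 : (0:ℝ) ≤ 2 * (d₁:ℝ) * Ms * (2 * Ms + 1) :=
        mul_nonneg (mul_nonneg (by linarith) hMs) (by linarith)
      linarith
    · intro θ y
      rw [oneLayerH_eq d₀ d₁ s hsdiff κ θ y]
      refine le_trans (norm_add_le _ _) ?_
      rw [norm_smul, Real.norm_eq_abs, abs_of_pos (by linarith : (0:ℝ) < 2 * κ)]
      have h2 := hSbound θ y
      have h3 := quad_bound (d₁:ℝ) Ms ‖y‖ hdd hMs (norm_nonneg y)
      linarith
  · have hQ0 : (0:ℝ) ≤ 2 * (d₁:ℝ) * Ms * (Ms + 2) :=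
      mul_nonneg (mul_nonneg (by linarith) hMs) (by linarith)
    refine ⟨κ, hκ, ((2 * (d₁:ℝ) * Ms * (Ms + 2) + 1) ^ 2 +
      (2 * (d₁:ℝ) * Ms * (2 * Ms + 1) + 1) ^ 2) / (2 * κ), ?_, ?_⟩
    · apply div_pos ?_ (by linarith)
      have hQ : (0:ℝ) < 2 * (d₁:ℝ) * Ms * (Ms + 2) + 1 := by linarith
      exact add_pos_of_pos_of_nonneg (pow_pos hQ 2) (sq_nonneg _)
    · intro θ y
      set Q : ℝ := 2 * (d₁:ℝ) * Ms * (Ms + 2) + 1 with hQdef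
      set R : ℝ := 2 * (d₁:ℝ) * Ms * (2 * Ms + 1) + 1 with hRdef
      have hy0 : (0:ℝ) ≤ ‖y‖ := norm_nonneg y
      have ht0 : (0:ℝ) ≤ ‖θ‖ := norm_nonneg θ
      have hP0 : (0:ℝ) ≤ (d₁:ℝ) * (2 * Ms * (Ms + ‖y‖) * (‖y‖ + 1)) :=
        mul_nonneg hdd (mul_nonneg (mul_nonneg (mul_nonneg (by norm_num) hMs)
          (by linarith)) (by linarith))
      have hPle : (d₁:ℝ) * (2 * Ms * (Ms + ‖y‖) * (‖y‖ + 1)) ≤ Q * ‖y‖ ^ 2 + R :=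
        quad_bound (d₁:ℝ) Ms ‖y‖ hdd hMs hy0
      have hlow := inner_add_smul_lower
        (∑ j, (2 * (s j (preAct d₀ d₁ (featurePart d₀ d₁ y) θ j) - labelPart d₀ d₁ y j) *
          deriv (s j) (preAct d₀ d₁ (featurePart d₀ d₁ y) θ j)) •
          uVec d₀ d₁ (featurePart d₀ d₁ y) j) θ (2 * κ)
        ((d₁:ℝ) * (2 * Ms * (Ms + ‖y‖) * (‖y‖ + 1))) (hSbound θ y)
      rw [oneLayerH_eq d₀ d₁ s hsdiff κ θ y]
      have hC2 : (Q ^ 2 + R ^ 2) / (2 * κ) * (2 * κ) = Q ^ 2 + R ^ 2 :=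
        div_mul_cancel₀ _ (by linarith : (2 * κ : ℝ) ≠ 0)
      have hC4 : 4 * κ * ((Q ^ 2 + R ^ 2) / (2 * κ) * (‖y‖ ^ 4 + 1)) =
          2 * (Q ^ 2 + R ^ 2) * (‖y‖ ^ 4 + 1) := by
        rw [show (4:ℝ) * κ * ((Q ^ 2 + R ^ 2) / (2 * κ) * (‖y‖ ^ 4 + 1)) =
          ((Q ^ 2 + R ^ 2) / (2 * κ) * (2 * κ)) * (2 * (‖y‖ ^ 4 + 1)) by ring, hC2]
        ring
      have hPP := mul_self_le_mul_self hP0 hPle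
      have hmain4 : 4 * κ * ((d₁:ℝ) * (2 * Ms * (Ms + ‖y‖) * (‖y‖ + 1)) * ‖θ‖) ≤
          4 * κ * (κ * ‖θ‖ ^ 2 + (Q ^ 2 + R ^ 2) / (2 * κ) * (‖y‖ ^ 4 + 1)) :=
        arith_aux κ ‖θ‖ ‖y‖ _ Q R _ hPP hC4
      have hmain : (d₁:ℝ) * (2 * Ms * (Ms + ‖y‖) * (‖y‖ + 1)) * ‖θ‖ ≤
          κ * ‖θ‖ ^ 2 + (Q ^ 2 + R ^ 2) / (2 * κ) * (‖y‖ ^ 4 + 1) :=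
        (mul_le_mul_iff_right₀ (by linarith : (0:ℝ) < 4 * κ)).mp hmain4
      linarith [hlow]
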